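/- Let A ∈ ℤ^{d×n} with ker(A) ∩ ℕ^n = {0} (so every fiber P(b) = {x ∈ ℕ^n : Ax = b} is finite). Let M ⊆ ker(A) ∩ ℤ^n be the set of vectors u - v over all binomials x^u - x^v in a universal Gröbner basis of I_A. Then for every b ∈ ℤ^d, the graph G_b on vertex set P(b) with edges {y, z} whenever y - z ∈ ±M is connected, i.e., M is a Markov basis for A. -/

import Mathlib

open MvPolynomial

/-- The toric ideal of an integer `d × n` matrix `A`. -/
noncomputable def toricIdeal (k : Type*) [Field k] {d n : ℕ} (A : Matrix (Fin d) (Fin n) ℤ) :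
    Ideal (MvPolynomial (Fin n) k) :=
  Ideal.span {f | ∃ u v : Fin n → ℕ,
    A.mulVec (fun i => (u i : ℤ)) = A.mulVec (fun i => (v i : ℤ)) ∧
    f = monomial (Finsupp.equivFunOnFinite.symm u) 1
      - monomial (Finsupp.equivFunOnFinite.symm v) 1}

/-- `w · α` for an integer weight vector `w` and an exponent vector `α ∈ ℕ^n`. -/
def wdot {n : ℕ} (w : Fin n → ℤ) (a : Fin n → ℕ) : ℤ := ∑ i, w i * (a i : ℤ)

/-- The matrix term order `≺_W`. -/
def precW {n : ℕ} (W : Matrix (Fin n) (Fin n) ℤ) (a b : Fin n → ℕ) : Prop :=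
  ∃ j : Fin n, (∀ i < j, wdot (W i) a = wdot (W i) b) ∧ wdot (W j) a < wdot (W j) b

/-- `μ` is the `≺_W`-leading exponent of the polynomial `f`. -/
def IsLeadExponent {k : Type*} [Field k] {n : ℕ} (W : Matrix (Fin n) (Fin n) ℤ)
    (f : MvPolynomial (Fin n) k) (μ : Fin n → ℕ) : Prop :=
  Finsupp.equivFunOnFinite.symm μ ∈ f.support ∧
    ∀ ν ∈ f.support, ν ≠ Finsupp.equivFunOnFinite.symm μ →
      precW W (Finsupp.equivFunOnFinite ν) μ

/-- `B` is a Gröbner basis of `I` with respect to `≺_W`. -/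
def IsGroebnerBasis {k : Type*} [Field k] {n : ℕ} (W : Matrix (Fin n) (Fin n) ℤ)
    (B : Set (MvPolynomial (Fin n) k)) (I : Ideal (MvPolynomial (Fin n) k)) : Prop :=
  ↑B ⊆ (I : Set (MvPolynomial (Fin n) k)) ∧
  ∀ f ∈ I, f ≠ 0 → ∃ g ∈ B, ∃ μg μf : Fin n → ℕ,
    IsLeadExponent W g μg ∧ IsLeadExponent W f μf ∧ ∀ i, μg i ≤ μf i

/-- `B` is a universal Gröbner basis of `I`: a Gröbner basis for every term order. -/
def IsUniversalGroebnerBasis {k : Type*} [Field k] {n : ℕ}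
    (B : Set (MvPolynomial (Fin n) k)) (I : Ideal (MvPolynomial (Fin n) k)) : Prop :=
  ∀ W : Matrix (Fin n) (Fin n) ℤ,
    (∀ a b : Fin n → ℕ, a ≠ b → precW W a b ∨ precW W b a) →
    IsGroebnerBasis W B I

/-! ### Auxiliary machinery for the proof -/

section MarkovAux

open MvPolynomial

/-- The lexicographic order on `ℕ^n`. -/
def PLex {n : ℕ} (a b : Fin n → ℕ) : Prop :=
  ∃ j : Fin n, (∀ i < j, a i = b i) ∧ a j < b j

lemma wdot_one {n : ℕ} (i : Fin n) (a : Fin n → ℕ) :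
    wdot ((1 : Matrix (Fin n) (Fin n) ℤ) i) a = a i := by
  simp [wdot, Matrix.one_apply, ite_mul]

lemma precW_one_iff {n : ℕ} (a b : Fin n → ℕ) : precW 1 a b ↔ PLex a b := by
  simp only [precW, PLex, wdot_one, Nat.cast_inj, Nat.cast_lt]

lemma PLex.wf {n : ℕ} : WellFounded (PLex (n := n)) := by
  have h := Pi.Lex.wellFounded (ι := Fin n) (α := fun _ => ℕ)
    (· < ·) (s := fun {_} => (· < ·)) (fun _ => wellFounded_lt)
  exact Subrelation.wf (fun {a b} hab => hab) h

lemma PLex.total {n : ℕ} {a b : Fin n → ℕ} (h : a ≠ b) : PLex a b ∨ PLex b a := by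
  have hne : (Finset.univ.filter (fun i => a i ≠ b i)).Nonempty := by
    by_contra hc
    apply h; funext i
    by_contra hi
    exact hc ⟨i, Finset.mem_filter.2 ⟨Finset.mem_univ _, hi⟩⟩
  set j := (Finset.univ.filter (fun i => a i ≠ b i)).min' hne with hj
  have hjmem := (Finset.univ.filter (fun i => a i ≠ b i)).min'_mem hne
  rw [Finset.mem_filter] at hjmem
  have heq : ∀ i < j, a i = b i := by
    intro i hij
    by_contra hi
    exact absurd (Finset.min'_le _ i (Finset.mem_filter.2 ⟨Finset.mem_univ _, hi⟩))
      (not_le.2 hij)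
  rcases lt_or_gt_of_ne hjmem.2 with hlt | hgt
  · exact Or.inl ⟨j, heq, hlt⟩
  · exact Or.inr ⟨j, fun i hij => (heq i hij).symm, hgt⟩

lemma PLex.asymm {n : ℕ} {a b : Fin n → ℕ} (h1 : PLex a b) (h2 : PLex b a) : False := by
  obtain ⟨j1, he1, hl1⟩ := h1
  obtain ⟨j2, he2, hl2⟩ := h2
  rcases lt_trichotomy j1 j2 with h | rfl | h
  · exact absurd (he2 j1 h) (ne_of_gt hl1)
  · exact absurd hl2 (not_lt.2 hl1.le)
  · exact absurd (he1 j2 h) (ne_of_gt hl2)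

lemma PLex.ne {n : ℕ} {a b : Fin n → ℕ} (h : PLex a b) : a ≠ b := by
  rintro rfl
  exact h.asymm h

/-- Evaluation of variables into the group algebra `k[ℤ^d]` realizing the `A`-grading. -/
noncomputable def phiF {k : Type*} [Field k] {d n : ℕ} (A : Matrix (Fin d) (Fin n) ℤ) :
    Fin n → AddMonoidAlgebra k (Fin d → ℤ) :=
  fun i => AddMonoidAlgebra.single (fun j => A j i) 1

lemma aeval_mon {k : Type*} [Field k] {d n : ℕ} (A : Matrix (Fin d) (Fin n) ℤ)
    (u : Fin n → ℕ) :
    aeval (R := k) (phiF (k := k) A) (monomial (Finsupp.equivFunOnFinite.symm u) (1 : k)) =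
      AddMonoidAlgebra.single (A.mulVec (fun i => (u i : ℤ))) 1 := by
  rw [aeval_monomial, map_one, one_mul]
  rw [Finsupp.prod_fintype _ _ (fun i => pow_zero _)]
  simp only [phiF, AddMonoidAlgebra.single_pow, one_pow, Finsupp.coe_equivFunOnFinite_symm]
  rw [AddMonoidAlgebra.prod_single]
  congr 1
  · funext j
    simp [Matrix.mulVec, dotProduct, Finset.sum_apply, mul_comm]
  · simp

/-- Binomials in the toric ideal are `A`-homogeneous. -/
lemma toric_homog {k : Type*} [Field k] {d n : ℕ} (A : Matrix (Fin d) (Fin n) ℤ)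
    (u v : Fin n → ℕ)
    (h : monomial (Finsupp.equivFunOnFinite.symm u) (1:k)
        - monomial (Finsupp.equivFunOnFinite.symm v) 1 ∈ toricIdeal k A) :
    A.mulVec (fun i => (u i : ℤ)) = A.mulVec (fun i => (v i : ℤ)) := by
  have hker : toricIdeal k A ≤ RingHom.ker (aeval (R := k) (phiF (k := k) A)).toRingHom := by
    rw [toricIdeal, Ideal.span_le]
    rintro f ⟨a, b, hab, rfl⟩
    rw [SetLike.mem_coe, RingHom.mem_ker]
    show aeval (R := k) (phiF (k := k) A) (monomial (Finsupp.equivFunOnFinite.symm a) (1 : k)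
      - monomial (Finsupp.equivFunOnFinite.symm b) (1 : k)) = 0
    rw [map_sub, aeval_mon, aeval_mon, hab, sub_self]
  have h0' := hker h
  rw [RingHom.mem_ker] at h0'
  have h0 : aeval (R := k) (phiF (k := k) A) (monomial (Finsupp.equivFunOnFinite.symm u) (1 : k)
      - monomial (Finsupp.equivFunOnFinite.symm v) (1 : k)) = 0 := h0'
  rw [map_sub, aeval_mon, aeval_mon, sub_eq_zero] at h0
  exact AddMonoidAlgebra.single_left_injective one_ne_zero h0

/-- The effect of one move: staying in the fiber, matching the move vector,
and lexicographic decrease. -/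
lemma move_lemma {d n : ℕ} (A : Matrix (Fin d) (Fin n) ℤ) (b : Fin d → ℤ)
    (y p q : Fin n → ℕ)
    (hy : A.mulVec (fun i => (y i : ℤ)) = b)
    (hpq : A.mulVec (fun i => (p i : ℤ)) = A.mulVec (fun i => (q i : ℤ)))
    (hdiv : ∀ i, p i ≤ y i) :
    A.mulVec (fun i => ((y i - p i + q i : ℕ) : ℤ)) = b ∧
    ((fun i => (y i : ℤ) - ((y i - p i + q i : ℕ) : ℤ)) = fun i => (p i : ℤ) - q i) ∧
    (PLex q p → PLex (fun i => y i - p i + q i) y) := by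
  have hcast : ∀ i, ((y i - p i + q i : ℕ) : ℤ) = (y i : ℤ) - p i + q i := by
    intro i
    push_cast [Nat.cast_sub (hdiv i)]
    ring
  refine ⟨?_, ?_, ?_⟩
  · have h1 : (fun i => ((y i - p i + q i : ℕ) : ℤ))
        = (fun i => (y i : ℤ)) - (fun i => (p i : ℤ)) + fun i => (q i : ℤ) := by
      funext i
      simp only [Pi.add_apply, Pi.sub_apply, hcast]
    rw [h1, Matrix.mulVec_add, Matrix.mulVec_sub, hy, hpq]
    abel
  · funext i
    rw [hcast]
    ring
  · rintro ⟨j, heq, hlt⟩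
    refine ⟨j, fun i hij => ?_, ?_⟩
    · have h1 := heq i hij
      have h2 := hdiv i
      show y i - p i + q i = y i
      omega
    · have h2 := hdiv j
      show y j - p j + q j < y j
      omega

end MarkovAux

/-- If `ker(A) ∩ ℕ^n = {0}` and `B` encodes a universal Gröbner basis of `I_A`, then the
moves `{u - v : (u,v) ∈ B}` form a Markov basis: for every `b`, any two points of the
fiber `P(b) = {x ∈ ℕ^n : A·x = b}` are connected by a path of `±(u-v)`-moves staying in
the fiber. -/
theorem universal_groebner_basis_is_markov_basis
    (k : Type*) [Field k] (d n : ℕ) (A : Matrix (Fin d) (Fin n) ℤ)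
    (hker : ∀ u : Fin n → ℕ, A.mulVec (fun i => (u i : ℤ)) = 0 → u = 0)
    (B : Set ((Fin n → ℕ) × (Fin n → ℕ)))
    (hUGB : IsUniversalGroebnerBasis
      {f : MvPolynomial (Fin n) k | ∃ p ∈ B,
        f = monomial (Finsupp.equivFunOnFinite.symm p.1) 1
          - monomial (Finsupp.equivFunOnFinite.symm p.2) 1}
      (toricIdeal k A)) :
    ∀ b : Fin d → ℤ, ∀ y z : Fin n → ℕ,
      A.mulVec (fun i => (y i : ℤ)) = b → A.mulVec (fun i => (z i : ℤ)) = b →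
      Relation.ReflTransGen
        (fun p q : Fin n → ℕ =>
          A.mulVec (fun i => (p i : ℤ)) = b ∧ A.mulVec (fun i => (q i : ℤ)) = b ∧
          ∃ m ∈ B, (fun i => (p i : ℤ) - (q i : ℤ)) = (fun i => (m.1 i : ℤ) - (m.2 i : ℤ))
            ∨ (fun i => (q i : ℤ) - (p i : ℤ)) = (fun i => (m.1 i : ℤ) - (m.2 i : ℤ)))
        y z := by
    classical
  intro b
  have htot : ∀ a c : Fin n → ℕ, a ≠ c → precW 1 a c ∨ precW 1 c a := by
    intro a c hac
    rw [precW_one_iff, precW_one_iff]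
    exact PLex.total hac
  obtain ⟨hBsub, hGB⟩ := hUGB 1 htot
  have Rsymm : Symmetric (fun p q : Fin n → ℕ =>
      A.mulVec (fun i => (p i : ℤ)) = b ∧ A.mulVec (fun i => (q i : ℤ)) = b ∧
      ∃ m ∈ B, (fun i => (p i : ℤ) - (q i : ℤ)) = (fun i => (m.1 i : ℤ) - (m.2 i : ℤ))
        ∨ (fun i => (q i : ℤ) - (p i : ℤ)) = (fun i => (m.1 i : ℤ) - (m.2 i : ℤ))) := by
    rintro p q ⟨h1, h2, m, hm, hc⟩
    exact ⟨h2, h1, m, hm, hc.symm⟩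
  have key : ∀ y : Fin n → ℕ, A.mulVec (fun i => (y i : ℤ)) = b → ∀ z : Fin n → ℕ,
      A.mulVec (fun i => (z i : ℤ)) = b → PLex z y →
      Relation.ReflTransGen
        (fun p q : Fin n → ℕ =>
          A.mulVec (fun i => (p i : ℤ)) = b ∧ A.mulVec (fun i => (q i : ℤ)) = b ∧
          ∃ m ∈ B, (fun i => (p i : ℤ) - (q i : ℤ)) = (fun i => (m.1 i : ℤ) - (m.2 i : ℤ))
            ∨ (fun i => (q i : ℤ) - (p i : ℤ)) = (fun i => (m.1 i : ℤ) - (m.2 i : ℤ)))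
        y z := by
    intro y
    refine PLex.wf.induction
      (C := fun y => A.mulVec (fun i => (y i : ℤ)) = b → ∀ z : Fin n → ℕ,
        A.mulVec (fun i => (z i : ℤ)) = b → PLex z y →
        Relation.ReflTransGen
          (fun p q : Fin n → ℕ =>
            A.mulVec (fun i => (p i : ℤ)) = b ∧ A.mulVec (fun i => (q i : ℤ)) = b ∧
            ∃ m ∈ B, (fun i => (p i : ℤ) - (q i : ℤ)) = (fun i => (m.1 i : ℤ) - (m.2 i : ℤ))
              ∨ (fun i => (q i : ℤ) - (p i : ℤ)) = (fun i => (m.1 i : ℤ) - (m.2 i : ℤ)))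
          y z) y ?_
    clear y
    intro y IH hy z hz hzy
    have hyz : y ≠ z := Ne.symm hzy.ne
    have hAyz : A.mulVec (fun i => (y i : ℤ)) = A.mulVec (fun i => (z i : ℤ)) :=
      hy.trans hz.symm
    set f : MvPolynomial (Fin n) k := monomial (Finsupp.equivFunOnFinite.symm y) 1
      - monomial (Finsupp.equivFunOnFinite.symm z) 1 with hfdef
    have hfI : f ∈ toricIdeal k A := Ideal.subset_span ⟨y, z, hAyz, rfl⟩
    have hsyz : Finsupp.equivFunOnFinite.symm y ≠ Finsupp.equivFunOnFinite.symm z :=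
      fun h => hyz (Finsupp.equivFunOnFinite.symm.injective h)
    have cy : coeff (Finsupp.equivFunOnFinite.symm y) f = 1 := by
      simp [hfdef, coeff_monomial, Ne.symm hsyz]
    have cz : coeff (Finsupp.equivFunOnFinite.symm z) f = -1 := by
      simp [hfdef, coeff_monomial, hsyz]
    have hf0 : f ≠ 0 := by
      intro h
      rw [h, coeff_zero] at cy
      exact one_ne_zero cy.symm
    obtain ⟨g, hgB, μg, μf, hLg, hLf, hle⟩ := hGB f hfI hf0
    have hgI : g ∈ toricIdeal k A := hBsub hgB
    obtain ⟨m, hmB, hgdef⟩ := hgB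
    -- identify the leading exponent of f
    have hsupf : μf = y ∨ μf = z := by
      have h1 := hLf.1
      rw [MvPolynomial.mem_support_iff, hfdef, coeff_sub, coeff_monomial, coeff_monomial] at h1
      by_contra hc
      push_neg at hc
      have hny : ¬(Finsupp.equivFunOnFinite.symm y = Finsupp.equivFunOnFinite.symm μf) :=
        fun h => hc.1 (Finsupp.equivFunOnFinite.symm.injective h).symm
      have hnz : ¬(Finsupp.equivFunOnFinite.symm z = Finsupp.equivFunOnFinite.symm μf) :=
        fun h => hc.2 (Finsupp.equivFunOnFinite.symm.injective h).symm
      rw [if_neg hny, if_neg hnz, sub_zero] at h1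
      exact h1 rfl
    have hμf : μf = y := by
      rcases hsupf with h | h
      · exact h
      · exfalso
        subst h
        have h2 := hLf.2 (Finsupp.equivFunOnFinite.symm y)
          (by rw [MvPolynomial.mem_support_iff, cy]; exact one_ne_zero) hsyz
        rw [Equiv.apply_symm_apply, precW_one_iff] at h2
        exact h2.asymm hzy
    -- facts about g
    have hm12 : m.1 ≠ m.2 := by
      intro h
      have hg0 : g = 0 := by rw [hgdef, h, sub_self]
      have h1 := hLg.1
      rw [hg0] at h1
      simp at h1
    have hsm : Finsupp.equivFunOnFinite.symm m.1 ≠ Finsupp.equivFunOnFinite.symm m.2 :=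
      fun h => hm12 (Finsupp.equivFunOnFinite.symm.injective h)
    have cg1 : coeff (Finsupp.equivFunOnFinite.symm m.1) g = 1 := by
      simp [hgdef, coeff_monomial, Ne.symm hsm]
    have cg2 : coeff (Finsupp.equivFunOnFinite.symm m.2) g = -1 := by
      simp [hgdef, coeff_monomial, hsm]
    have hsupg : μg = m.1 ∨ μg = m.2 := by
      have h1 := hLg.1
      rw [MvPolynomial.mem_support_iff, hgdef, coeff_sub, coeff_monomial, coeff_monomial] at h1
      by_contra hc
      push_neg at hc
      have hn1 : ¬(Finsupp.equivFunOnFinite.symm m.1 = Finsupp.equivFunOnFinite.symm μg) :=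
        fun h => hc.1 (Finsupp.equivFunOnFinite.symm.injective h).symm
      have hn2 : ¬(Finsupp.equivFunOnFinite.symm m.2 = Finsupp.equivFunOnFinite.symm μg) :=
        fun h => hc.2 (Finsupp.equivFunOnFinite.symm.injective h).symm
      rw [if_neg hn1, if_neg hn2, sub_zero] at h1
      exact h1 rfl
    have hAm : A.mulVec (fun i => (m.1 i : ℤ)) = A.mulVec (fun i => (m.2 i : ℤ)) := by
      apply toric_homog (k := k) A m.1 m.2
      rw [← hgdef]
      exact hgI
    rcases hsupg with hμg | hμg
    · -- leading term of g is x^{m.1}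
      have hlexm : PLex m.2 m.1 := by
        have h2 := hLg.2 (Finsupp.equivFunOnFinite.symm m.2)
          (by rw [MvPolynomial.mem_support_iff, cg2]; exact neg_ne_zero.2 one_ne_zero)
          (by rw [hμg]; exact Ne.symm hsm)
        rw [hμg, Equiv.apply_symm_apply, precW_one_iff] at h2
        exact h2
      have hdiv : ∀ i, m.1 i ≤ y i := by
        intro i
        rw [← hμg, ← hμf]
        exact hle i
      obtain ⟨hy', hmove, hdec⟩ := move_lemma A b y m.1 m.2 hy hAm hdiv
      have hstep := Relation.ReflTransGen.single
        (a := y) (b := fun i => y i - m.1 i + m.2 i)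
        (r := fun p q : Fin n → ℕ =>
          A.mulVec (fun i => (p i : ℤ)) = b ∧ A.mulVec (fun i => (q i : ℤ)) = b ∧
          ∃ m ∈ B, (fun i => (p i : ℤ) - (q i : ℤ)) = (fun i => (m.1 i : ℤ) - (m.2 i : ℤ))
            ∨ (fun i => (q i : ℤ) - (p i : ℤ)) = (fun i => (m.1 i : ℤ) - (m.2 i : ℤ)))
        ⟨hy, hy', m, hmB, Or.inl hmove⟩
      have hlt : PLex (fun i => y i - m.1 i + m.2 i) y := hdec hlexm
      rcases eq_or_ne (fun i => y i - m.1 i + m.2 i) z with heq | hne'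
      · rw [← heq]
        exact hstep
      · rcases PLex.total hne' with h1 | h2
        · have hrec := IH z hzy hz (fun i => y i - m.1 i + m.2 i) hy' h1
          exact Relation.ReflTransGen.trans hstep (by haveI := Std.Symm.mk (fun a b => @Rsymm a b); exact Std.Symm.symm _ _ hrec)
        · exact Relation.ReflTransGen.trans hstep (IH _ hlt hy' z hz h2)
    · -- leading term of g is x^{m.2}
      have hlexm : PLex m.1 m.2 := by
        have h2 := hLg.2 (Finsupp.equivFunOnFinite.symm m.1)
          (by rw [MvPolynomial.mem_support_iff, cg1]; exact one_ne_zero)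
          (by rw [hμg]; exact hsm)
        rw [hμg, Equiv.apply_symm_apply, precW_one_iff] at h2
        exact h2
      have hdiv : ∀ i, m.2 i ≤ y i := by
        intro i
        rw [← hμg, ← hμf]
        exact hle i
      obtain ⟨hy', hmove, hdec⟩ := move_lemma A b y m.2 m.1 hy hAm.symm hdiv
      have hmove' : (fun i => (((fun i => y i - m.2 i + m.1 i) i : ℕ) : ℤ) - (y i : ℤ))
          = fun i => (m.1 i : ℤ) - m.2 i := by
        funext i
        have hh := congrFun hmove i
        simp only at hh ⊢
        linarith
      have hstep := Relation.ReflTransGen.single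
        (a := y) (b := fun i => y i - m.2 i + m.1 i)
        (r := fun p q : Fin n → ℕ =>
          A.mulVec (fun i => (p i : ℤ)) = b ∧ A.mulVec (fun i => (q i : ℤ)) = b ∧
          ∃ m ∈ B, (fun i => (p i : ℤ) - (q i : ℤ)) = (fun i => (m.1 i : ℤ) - (m.2 i : ℤ))
            ∨ (fun i => (q i : ℤ) - (p i : ℤ)) = (fun i => (m.1 i : ℤ) - (m.2 i : ℤ)))
        ⟨hy, hy', m, hmB, Or.inr hmove'⟩
      have hlt : PLex (fun i => y i - m.2 i + m.1 i) y := hdec hlexm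
      rcases eq_or_ne (fun i => y i - m.2 i + m.1 i) z with heq | hne'
      · rw [← heq]
        exact hstep
      · rcases PLex.total hne' with h1 | h2
        · have hrec := IH z hzy hz (fun i => y i - m.2 i + m.1 i) hy' h1
          exact Relation.ReflTransGen.trans hstep (by haveI := Std.Symm.mk (fun a b => @Rsymm a b); exact Std.Symm.symm _ _ hrec)
        · exact Relation.ReflTransGen.trans hstep (IH _ hlt hy' z hz h2)
  intro y z hy hz
  rcases eq_or_ne y z with rfl | hne
  · exact Relation.ReflTransGen.refl
  · rcases PLex.total hne with h1 | h2
    · haveI := Std.Symm.mk (fun a b => @Rsymm a b); exact Std.Symm.symm _ _ (key z hz y hy h1)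
    · exact key y hy z hz h2
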